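/- arXiv:1904.07018 — 4 statements merged into one kernel-verified Lean document; each statement's English description precedes it below -/
import Mathlib

section
/- Suppose the objective F is strictly improved by completing an assignment, i.e. for every assignment X, every i₀ ∈ U, j₀ ∈ M and k₀ ∈ K_{i₀} with x_{i₀j₀}^{k₀} = 0, the assignment X' obtained from X by setting x_{i₀j₀}^{k₀} = 1 satisfies F(X') > F(X). If P1 admits at least one feasible solution, then the set of optimal solutions of P2 coincides exactly with the set of optimal solutions of P1: an assignment X maximizes F over the P2-feasible assignments if and only if it maximizes F over the P1-feasible assignments. -/
open Finset

/-- An assignment is `{0,1}`-valued. -/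
def IsAssign {U M K : Type*} (X : U → M → K → ℕ) : Prop :=
  ∀ i j k, X i j k ≤ 1

/-- The load of server `j` under assignment `X`. -/
def load {U M K : Type*} [Fintype U] (Ki : U → Finset K) (lam : ℝ)
    (X : U → M → K → ℕ) (j : M) : ℝ :=
  lam * ∑ i, ∑ k ∈ Ki i, (X i j k : ℝ)

/-- P1-feasibility: binary assignment, capacity constraints, and equality
constraints `∑ j, x_{ij}^k = 1` for all `i` and `k ∈ K_i`. -/
def P1Feas {U M K : Type*} [Fintype U] [Fintype M] (Ki : U → Finset K)
    (lam : ℝ) (c : M → ℝ) (X : U → M → K → ℕ) : Prop :=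
  IsAssign X ∧ (∀ j, load Ki lam X j ≤ c j) ∧
    ∀ i, ∀ k ∈ Ki i, ∑ j, X i j k = 1

/-- P2-feasibility: binary assignment, capacity constraints, and relaxed
constraints `∑ j, x_{ij}^k ≤ 1` for all `i` and `k ∈ K_i`. -/
def P2Feas {U M K : Type*} [Fintype U] [Fintype M] (Ki : U → Finset K)
    (lam : ℝ) (c : M → ℝ) (X : U → M → K → ℕ) : Prop :=
  IsAssign X ∧ (∀ j, load Ki lam X j ≤ c j) ∧
    ∀ i, ∀ k ∈ Ki i, ∑ j, X i j k ≤ 1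

/-- Theorem 1: if the objective strictly improves when completing an assignment
and P1 has a feasible solution, then the optimal solutions of P2 are exactly
those of P1. -/
theorem P2_optimal_iff_P1_optimal
    {U M K : Type*} [Fintype U] [Fintype M] [Fintype K]
    [DecidableEq U] [DecidableEq M] [DecidableEq K]
    (Ki : U → Finset K) (lam : ℝ) (hlam : 0 < lam) (c : M → ℝ)
    (F : (U → M → K → ℕ) → ℝ)
    (himp : ∀ (X : U → M → K → ℕ), IsAssign X →
      ∀ i₀ j₀ k₀, k₀ ∈ Ki i₀ → X i₀ j₀ k₀ = 0 →
        F (fun i j k => if i = i₀ ∧ j = j₀ ∧ k = k₀ then 1 else X i j k) > F X)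
    (hfeas : ∃ X, P1Feas Ki lam c X) :
    ∀ X : U → M → K → ℕ,
      (P2Feas Ki lam c X ∧ ∀ Y, P2Feas Ki lam c Y → F Y ≤ F X) ↔
      (P1Feas Ki lam c X ∧ ∀ Y, P1Feas Ki lam c Y → F Y ≤ F X) := by
  classical
  obtain ⟨Z, hZ⟩ := hfeas
  have p1p2 : ∀ W, P1Feas Ki lam c W → P2Feas Ki lam c W := by
    rintro W ⟨h1, h2, h3⟩
    exact ⟨h1, h2, fun i k hk => le_of_eq (h3 i k hk)⟩
  have swap : ∀ W : U → M → K → ℕ,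
      ∑ p ∈ Finset.univ.sigma Ki, (∑ j, W p.1 j p.2)
        = ∑ j, ∑ i, ∑ k ∈ Ki i, W i j k := by
    intro W
    calc ∑ p ∈ Finset.univ.sigma Ki, (∑ j, W p.1 j p.2)
        = ∑ i, ∑ k ∈ Ki i, ∑ j, W i j k := Finset.sum_sigma _ _ _
      _ = ∑ i, ∑ j, ∑ k ∈ Ki i, W i j k :=
          Finset.sum_congr rfl fun i _ => Finset.sum_comm
      _ = ∑ j, ∑ i, ∑ k ∈ Ki i, W i j k := Finset.sum_comm
  have loadeq : ∀ (W : U → M → K → ℕ) j,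
      load Ki lam W j = lam * ((∑ i, ∑ k ∈ Ki i, W i j k : ℕ) : ℝ) := by
    intro W j
    unfold load
    push_cast
    ring
  -- one-step improvement
  have step : ∀ Y, P2Feas Ki lam c Y → ∀ i₀ k₀, k₀ ∈ Ki i₀ →
      (∑ j, Y i₀ j k₀ = 0) →
      ∃ Y', P2Feas Ki lam c Y' ∧ F Y < F Y' ∧
        (∀ i k, (∑ j, Y' i j k)
          = (∑ j, Y i j k) + if i = i₀ ∧ k = k₀ then 1 else 0) := by
    intro Y hY i₀ k₀ hk hzero
    have hrow0 : ∀ j, Y i₀ j k₀ = 0 := by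
      intro j
      exact (Finset.sum_eq_zero_iff.mp hzero) j (Finset.mem_univ j)
    -- find a server with slack
    have key : ∑ p ∈ Finset.univ.sigma Ki, (∑ j, Y p.1 j p.2)
        < ∑ p ∈ Finset.univ.sigma Ki, (∑ j, Z p.1 j p.2) := by
      apply Finset.sum_lt_sum
      · intro p hp
        rw [hZ.2.2 p.1 p.2 (Finset.mem_sigma.mp hp).2]
        exact hY.2.2 p.1 p.2 (Finset.mem_sigma.mp hp).2
      · refine ⟨⟨i₀, k₀⟩, Finset.mem_sigma.mpr ⟨Finset.mem_univ _, hk⟩, ?_⟩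
        rw [hzero, hZ.2.2 i₀ k₀ hk]
        norm_num
    have hj : ∃ j₀, ∑ i, ∑ k ∈ Ki i, Y i j₀ k < ∑ i, ∑ k ∈ Ki i, Z i j₀ k := by
      by_contra hcon
      push_neg at hcon
      have := Finset.sum_le_sum (fun j (_ : j ∈ Finset.univ) => hcon j)
      rw [← swap Y, ← swap Z] at this
      omega
    obtain ⟨j₀, hj₀⟩ := hj
    set Y' : U → M → K → ℕ :=
      fun i j k => if i = i₀ ∧ j = j₀ ∧ k = k₀ then 1 else Y i j k with hY'def
    have hYd : ∀ i j k, Y' i j k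
        = Y i j k + if i = i₀ ∧ j = j₀ ∧ k = k₀ then 1 else 0 := by
      intro i j k
      by_cases h : i = i₀ ∧ j = j₀ ∧ k = k₀
      · obtain ⟨h1, h2, h3⟩ := h
        subst h1; subst h2; subst h3
        simp [hY'def, hrow0]
      · simp [hY'def, h]
    have hrowY' : ∀ i k, (∑ j, Y' i j k)
        = (∑ j, Y i j k) + if i = i₀ ∧ k = k₀ then 1 else 0 := by
      intro i k
      simp_rw [hYd]
      rw [Finset.sum_add_distrib]
      congr 1
      by_cases h : i = i₀ ∧ k = k₀
      · simp [h]
      · rw [if_neg h, Finset.sum_eq_zero]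
        intro j _
        rw [if_neg]
        tauto
    have hcolY' : ∀ j, (∑ i, ∑ k ∈ Ki i, Y' i j k)
        = (∑ i, ∑ k ∈ Ki i, Y i j k) + if j = j₀ then 1 else 0 := by
      intro j
      simp_rw [hYd]
      rw [Finset.sum_congr rfl fun i _ => Finset.sum_add_distrib,
        Finset.sum_add_distrib]
      congr 1
      by_cases h : j = j₀
      · subst h
        rw [if_pos rfl, Finset.sum_eq_single i₀]
        · rw [Finset.sum_eq_single k₀]
          · simp
          · intro k _ hkne
            rw [if_neg]
            tauto
          · intro hnk
            exact absurd hk hnk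
        · intro i _ hine
          rw [Finset.sum_eq_zero]
          intro k _
          rw [if_neg]
          tauto
        · intro h
          exact absurd (Finset.mem_univ i₀) h
      · rw [if_neg h, Finset.sum_eq_zero]
        intro i _
        rw [Finset.sum_eq_zero]
        intro k _
        rw [if_neg]
        tauto
    have hP2 : P2Feas Ki lam c Y' := by
      refine ⟨?_, ?_, ?_⟩
      · intro i j k
        rw [hYd]
        split
        · rename_i h
          obtain ⟨h1, h2, h3⟩ := h
          subst h1; subst h2; subst h3
          rw [hrow0]
        · have := hY.1 i j k
          omega
      · intro j
        rw [loadeq, hcolY']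
        by_cases h : j = j₀
        · rw [h, if_pos rfl]
          calc lam * (((∑ i, ∑ k ∈ Ki i, Y i j₀ k) + 1 : ℕ) : ℝ)
              ≤ lam * ((∑ i, ∑ k ∈ Ki i, Z i j₀ k : ℕ) : ℝ) := by
                apply mul_le_mul_of_nonneg_left _ hlam.le
                exact_mod_cast hj₀
            _ = load Ki lam Z j₀ := (loadeq Z j₀).symm
            _ ≤ c j₀ := hZ.2.1 j₀
        · rw [if_neg h, add_zero, ← loadeq]
          exact hY.2.1 j
      · intro i k hkk
        rw [hrowY']
        by_cases h : i = i₀ ∧ k = k₀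
        · rw [if_pos h, h.1, h.2, hzero]
        · rw [if_neg h, add_zero]
          exact hY.2.2 i k hkk
    refine ⟨Y', hP2, ?_, hrowY'⟩
    exact himp Y hY.1 i₀ j₀ k₀ hk (hrow0 j₀)
  -- completion: any P2-feasible can be improved to a P1-feasible
  have complete : ∀ n (Y : U → M → K → ℕ), P2Feas Ki lam c Y →
      ((Finset.univ.sigma Ki).filter (fun p => ∑ j, Y p.1 j p.2 = 0)).card = n →
      ∃ Y', P1Feas Ki lam c Y' ∧ F Y ≤ F Y' := by
    intro n
    induction n using Nat.strong_induction_on with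
    | _ n ih =>
      intro Y hY hcard
      by_cases h0 : ((Finset.univ.sigma Ki).filter
          (fun p => ∑ j, Y p.1 j p.2 = 0)) = ∅
      · refine ⟨Y, ⟨hY.1, hY.2.1, ?_⟩, le_refl _⟩
        intro i k hk
        have hle := hY.2.2 i k hk
        have hne : ∑ j, Y i j k ≠ 0 := by
          intro hz
          have : (⟨i, k⟩ : Σ _ : U, K) ∈ ((Finset.univ.sigma Ki).filter
              (fun p => ∑ j, Y p.1 j p.2 = 0)) :=
            Finset.mem_filter.mpr ⟨Finset.mem_sigma.mpr ⟨Finset.mem_univ _, hk⟩, hz⟩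
          rw [h0] at this
          exact absurd this (Finset.notMem_empty _)
        omega
      · obtain ⟨p, hp⟩ := Finset.nonempty_iff_ne_empty.mpr h0
        obtain ⟨hpmem, hpz⟩ := Finset.mem_filter.mp hp
        obtain ⟨_, hpk⟩ := Finset.mem_sigma.mp hpmem
        obtain ⟨Y', hY'2, hlt, hrow⟩ := step Y hY p.1 p.2 hpk hpz
        have hfilter : ((Finset.univ.sigma Ki).filter
            (fun q => ∑ j, Y' q.1 j q.2 = 0))
            = ((Finset.univ.sigma Ki).filter
              (fun q => ∑ j, Y q.1 j q.2 = 0)).erase p := by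
          ext q
          simp only [Finset.mem_filter, Finset.mem_erase]
          constructor
          · rintro ⟨hq, hqz⟩
            rw [hrow] at hqz
            by_cases h : q.1 = p.1 ∧ q.2 = p.2
            · rw [if_pos h] at hqz
              omega
            · rw [if_neg h, add_zero] at hqz
              refine ⟨?_, hq, hqz⟩
              intro he
              exact h ⟨by rw [he], by rw [he]⟩
          · rintro ⟨hne, hq, hqz⟩
            refine ⟨hq, ?_⟩
            rw [hrow]
            rw [if_neg, add_zero]
            · exact hqz
            rintro ⟨h1, h2⟩
            exact hne (Sigma.ext h1 (heq_of_eq h2))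
        have hcard' : ((Finset.univ.sigma Ki).filter
            (fun q => ∑ j, Y' q.1 j q.2 = 0)).card < n := by
          rw [hfilter, Finset.card_erase_of_mem hp, hcard]
          have : 0 < n := by
            rw [← hcard]
            exact Finset.card_pos.mpr ⟨p, hp⟩
          omega
        obtain ⟨Y'', h1, h2⟩ := ih _ hcard' Y' hY'2 rfl
        exact ⟨Y'', h1, le_trans hlt.le h2⟩
  intro X
  constructor
  · rintro ⟨hX2, hXopt⟩
    have hX1 : P1Feas Ki lam c X := by
      refine ⟨hX2.1, hX2.2.1, ?_⟩
      intro i k hk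
      by_contra hne
      have hz : ∑ j, X i j k = 0 := by
        have := hX2.2.2 i k hk
        omega
      obtain ⟨X', hX', hlt, _⟩ := step X hX2 i k hk hz
      exact absurd (hXopt X' hX') (not_le.mpr hlt)
    exact ⟨hX1, fun Y hY1 => hXopt Y (p1p2 Y hY1)⟩
  · rintro ⟨hX1, hXopt⟩
    refine ⟨p1p2 X hX1, fun Y hY => ?_⟩
    obtain ⟨Y', hY', hle⟩ := complete _ Y hY rfl
    exact hle.trans (hXopt Y' hY')
end

section
/- Suppose the objective F is strictly improved by completing an assignment, i.e. for every assignment X, every i₀ ∈ U, j₀ ∈ M and k₀ ∈ K_{i₀} with x_{i₀j₀}^{k₀} = 0, the assignment X' obtained from X by setting x_{i₀j₀}^{k₀} = 1 satisfies F(X') > F(X). If P1 admits at least one feasible solution, then every optimal solution X of P2 satisfies all the equality constraints of P1, i.e. ∑_{j∈M} x_{ij}^k = 1 for every i ∈ U and every k ∈ K_i; in particular X is P1-feasible. -/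
open Finset

/-- Theorem 2: under the strict-improvement hypothesis, if P1 is feasible then
every P2-optimal solution satisfies all equality constraints of P1, hence is
P1-feasible. -/
theorem P2_optimal_satisfies_equalities
    {U M K : Type*} [Fintype U] [Fintype M] [Fintype K]
    [DecidableEq U] [DecidableEq M] [DecidableEq K]
    (Ki : U → Finset K) (lam : ℝ) (hlam : 0 < lam) (c : M → ℝ)
    (F : (U → M → K → ℕ) → ℝ)
    (himp : ∀ (X : U → M → K → ℕ), IsAssign X →
      ∀ i₀ j₀ k₀, k₀ ∈ Ki i₀ → X i₀ j₀ k₀ = 0 →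
        F (fun i j k => if i = i₀ ∧ j = j₀ ∧ k = k₀ then 1 else X i j k) > F X)
    (hfeas : ∃ X, P1Feas Ki lam c X)
    (X : U → M → K → ℕ)
    (hopt : P2Feas Ki lam c X ∧ ∀ Y, P2Feas Ki lam c Y → F Y ≤ F X) :
    (∀ i, ∀ k ∈ Ki i, ∑ j, X i j k = 1) ∧ P1Feas Ki lam c X := by
  obtain ⟨⟨hXa, hXc, hXle⟩, hmax⟩ := hopt
  obtain ⟨Z, hZa, hZc, hZeq⟩ := hfeas
  suffices heq : ∀ i, ∀ k ∈ Ki i, ∑ j, X i j k = 1 from ⟨heq, hXa, hXc, heq⟩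
  by_contra hcon
  push_neg at hcon
  obtain ⟨i₀, k₀, hk₀, hne⟩ := hcon
  have h0 : ∑ j, X i₀ j k₀ = 0 := by
    have := hXle i₀ k₀ hk₀; omega
  have hX0 : ∀ j, X i₀ j k₀ = 0 := fun j =>
    (Finset.sum_eq_zero_iff).mp h0 j (Finset.mem_univ j)
  have hj₀ : ∃ j₀, load Ki lam X j₀ + lam ≤ c j₀ := by
    by_contra hno
    push_neg at hno
    have key : ∀ j, (∑ i, ∑ k ∈ Ki i, Z i j k) ≤ ∑ i, ∑ k ∈ Ki i, X i j k := by
      intro j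
      have h1 : lam * (∑ i, ∑ k ∈ Ki i, (Z i j k : ℝ)) ≤ c j := hZc j
      have h2 : c j < lam * (∑ i, ∑ k ∈ Ki i, (X i j k : ℝ)) + lam := hno j
      have h3 : (∑ i, ∑ k ∈ Ki i, (Z i j k : ℝ)) < (∑ i, ∑ k ∈ Ki i, (X i j k : ℝ)) + 1 := by
        nlinarith
      have h4 : ((∑ i, ∑ k ∈ Ki i, Z i j k : ℕ) : ℝ) < ((∑ i, ∑ k ∈ Ki i, X i j k : ℕ) : ℝ) + 1 := by
        push_cast
        exact h3
      have h5 : (∑ i, ∑ k ∈ Ki i, Z i j k) < (∑ i, ∑ k ∈ Ki i, X i j k) + 1 := by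
        exact_mod_cast h4
      omega
    have hZtot : ∑ j, ∑ i, ∑ k ∈ Ki i, Z i j k = ∑ i, (Ki i).card := by
      rw [Finset.sum_comm]
      refine Finset.sum_congr rfl fun i _ => ?_
      rw [Finset.sum_comm]
      simp [hZeq i _ , Finset.sum_congr rfl (fun k hk => hZeq i k hk)]
    have hXtot : ∑ j, ∑ i, ∑ k ∈ Ki i, X i j k < ∑ i, (Ki i).card := by
      have hrw : ∑ j, ∑ i, ∑ k ∈ Ki i, X i j k = ∑ i, ∑ k ∈ Ki i, ∑ j, X i j k := by
        rw [Finset.sum_comm]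
        exact Finset.sum_congr rfl fun i _ => Finset.sum_comm
      rw [hrw]
      refine Finset.sum_lt_sum (fun i _ => ?_) ⟨i₀, Finset.mem_univ i₀, ?_⟩
      · calc ∑ k ∈ Ki i, ∑ j, X i j k ≤ ∑ k ∈ Ki i, 1 :=
              Finset.sum_le_sum fun k hk => hXle i k hk
          _ = (Ki i).card := by simp
      · calc ∑ k ∈ Ki i₀, ∑ j, X i₀ j k < ∑ k ∈ Ki i₀, 1 := by
              refine Finset.sum_lt_sum (fun k hk => hXle i₀ k hk) ⟨k₀, hk₀, ?_⟩
              rw [h0]; norm_num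
          _ = (Ki i₀).card := by simp
    have := Finset.sum_le_sum (fun j (_ : j ∈ Finset.univ) => key j)
    omega
  obtain ⟨j₀, hj₀⟩ := hj₀
  set X' : U → M → K → ℕ := fun i j k => if i = i₀ ∧ j = j₀ ∧ k = k₀ then 1 else X i j k with hX'def
  have hsplit : ∀ i j k, X' i j k = X i j k + (if i = i₀ ∧ j = j₀ ∧ k = k₀ then 1 else 0) := by
    intro i j k
    by_cases h : i = i₀ ∧ j = j₀ ∧ k = k₀
    · obtain ⟨h1, h2, h3⟩ := h
      simp [hX'def, h1, h2, h3, hX0]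
    · simp [hX'def, h]
  have hfeas' : P2Feas Ki lam c X' := by
    refine ⟨?_, ?_, ?_⟩
    · intro i j k
      rw [hsplit i j k]
      by_cases h : i = i₀ ∧ j = j₀ ∧ k = k₀
      · obtain ⟨h1, h2, h3⟩ := h
        subst h1; subst h2; subst h3
        simp [hX0]
      · simp [h]
        exact hXa i j k
    · intro j
      have hload : load Ki lam X' j =
          load Ki lam X j + lam * ∑ i, ∑ k ∈ Ki i, (if i = i₀ ∧ j = j₀ ∧ k = k₀ then (1:ℝ) else 0) := by
        unfold load
        rw [← mul_add, ← Finset.sum_add_distrib]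
        congr 1
        refine Finset.sum_congr rfl fun i _ => ?_
        rw [← Finset.sum_add_distrib]
        refine Finset.sum_congr rfl fun k hk => ?_
        rw [hsplit i j k]
        push_cast
        split <;> simp
      by_cases hj : j = j₀
      · have hind : ∑ i, ∑ k ∈ Ki i, (if i = i₀ ∧ j = j₀ ∧ k = k₀ then (1:ℝ) else 0) = 1 := by
          rw [Finset.sum_eq_single i₀]
          · rw [Finset.sum_eq_single_of_mem k₀ hk₀]
            · simp [hj]
            · intro k _ hkne; simp [hkne]
          · intro i _ hine; exact Finset.sum_eq_zero fun k _ => by simp [hine]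
          · simp
        rw [hload, hind, mul_one, hj]
        exact hj₀
      · have hind : ∑ i, ∑ k ∈ Ki i, (if i = i₀ ∧ j = j₀ ∧ k = k₀ then (1:ℝ) else 0) = 0 := by
          refine Finset.sum_eq_zero fun i _ => Finset.sum_eq_zero fun k hk => ?_
          simp [hj]
        rw [hload, hind, mul_zero, add_zero]
        exact hXc j
    · intro i k hk
      have : ∑ j, X' i j k = ∑ j, X i j k + ∑ j, (if i = i₀ ∧ j = j₀ ∧ k = k₀ then 1 else 0) := by
        rw [← Finset.sum_add_distrib]
        exact Finset.sum_congr rfl fun j _ => hsplit i j k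
      rw [this]
      by_cases h : i = i₀ ∧ k = k₀
      · obtain ⟨h1, h2⟩ := h
        subst h1; subst h2
        rw [h0]
        simp
      · have : ∑ j, (if i = i₀ ∧ j = j₀ ∧ k = k₀ then 1 else 0) = 0 := by
          refine Finset.sum_eq_zero fun j _ => ?_
          by_cases h1 : i = i₀ <;> by_cases h2 : k = k₀ <;> simp_all
        rw [this, add_zero]
        exact hXle i k hk
  have hgt : F X' > F X := himp X hXa i₀ j₀ k₀ hk₀ (hX0 j₀)
  have hle := hmax X' hfeas'
  linarith
end

section
/- Suppose P1 admits at least one feasible solution. If X is a P2-feasible assignment for which some request is unserved, i.e. there exist i₀ ∈ U and k₀ ∈ K_{i₀} with ∑_{j∈M} x_{i₀j}^{k₀} = 0, then some server has strictly slack capacity: there exists j₀ ∈ M with L_{j₀}(X) < c_{j₀}. -/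
open Finset

/-- if P1 is feasible and a P2-feasible assignment leaves some
request unserved, then some server has strictly slack capacity. -/
theorem exists_slack_server_of_unserved
    {U M K : Type*} [Fintype U] [Fintype M] [Fintype K]
    (Ki : U → Finset K) (lam : ℝ) (hlam : 0 < lam) (c : M → ℝ)
    (hfeas : ∃ X, P1Feas Ki lam c X)
    (X : U → M → K → ℕ) (hX : P2Feas Ki lam c X)
    (i₀ : U) (k₀ : K) (hk₀ : k₀ ∈ Ki i₀) (hun : ∑ j, X i₀ j k₀ = 0) :
    ∃ j₀, load Ki lam X j₀ < c j₀ := by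
  obtain ⟨Y, _, hYc, hY1⟩ := hfeas
  by_contra h
  push_neg at h
  have key : ∀ (Z : U → M → K → ℕ), ∑ j, load Ki lam Z j
      = lam * ∑ i, ∑ k ∈ Ki i, ((∑ j, Z i j k : ℕ) : ℝ) := by
    intro Z
    simp only [load, ← Finset.mul_sum]
    congr 1
    rw [Finset.sum_comm]
    refine Finset.sum_congr rfl fun i _ => ?_
    rw [Finset.sum_comm]
    simp [Nat.cast_sum]
  have hXlt : ∑ i, ∑ k ∈ Ki i, ((∑ j, X i j k : ℕ) : ℝ)
      < ∑ i, ∑ k ∈ Ki i, ((∑ j, Y i j k : ℕ) : ℝ) := by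
    have hle : ∀ i, ∀ k ∈ Ki i, ((∑ j, X i j k : ℕ) : ℝ) ≤ ((∑ j, Y i j k : ℕ) : ℝ) := by
      intro i k hk
      have h1 := hX.2.2 i k hk
      have h2 := hY1 i k hk
      exact_mod_cast by omega
    refine Finset.sum_lt_sum (fun i _ => Finset.sum_le_sum (hle i)) ⟨i₀, Finset.mem_univ _, ?_⟩
    refine Finset.sum_lt_sum (hle i₀) ⟨k₀, hk₀, ?_⟩
    rw [hun, hY1 i₀ k₀ hk₀]
    norm_num
  have h1 : ∑ j, load Ki lam X j < ∑ j, load Ki lam Y j := by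
    rw [key X, key Y]
    exact mul_lt_mul_of_pos_left hXlt hlam
  have h2 : ∑ j, load Ki lam Y j ≤ ∑ j, c j := Finset.sum_le_sum fun j _ => hYc j
  have h3 : ∑ j, c j ≤ ∑ j, load Ki lam X j := Finset.sum_le_sum fun j _ => h j
  linarith
end

section
/- Suppose the objective F is strictly improved by completing an assignment, i.e. for every assignment X, every i₀ ∈ U, j₀ ∈ M and k₀ ∈ K_{i₀} with x_{i₀j₀}^{k₀} = 0, the assignment X' obtained from X by setting x_{i₀j₀}^{k₀} = 1 satisfies F(X') > F(X). If P1 admits at least one feasible solution, then the optimal value of P2 equals the optimal value of P1: the maximum of F over all P2-feasible assignments equals the maximum of F over all P1-feasible assignments. -/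
open Finset

section Aux

variable {U M K : Type*} [Fintype U] [Fintype M] [Fintype K]
  [DecidableEq U] [DecidableEq M] [DecidableEq K]

/-- Deficiency: number of unassigned requests. -/
def defic (Ki : U → Finset K) (X : U → M → K → ℕ) : ℕ :=
  ∑ i, ∑ k ∈ Ki i, (1 - ∑ j : M, X i j k)

/-- Number of requests served by server `j`. -/
def nload (Ki : U → Finset K) (X : U → M → K → ℕ) (j : M) : ℕ :=
  ∑ i, ∑ k ∈ Ki i, X i j k

lemma load_eq_nload (Ki : U → Finset K) (lam : ℝ) (X : U → M → K → ℕ) (j : M) :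
    load Ki lam X j = lam * (nload Ki X j : ℝ) := by
  simp [load, nload]

lemma defic_zero_P1 (Ki : U → Finset K) (lam : ℝ) (c : M → ℝ)
    (X : U → M → K → ℕ) (hX : P2Feas Ki lam c X) (h0 : defic Ki X = 0) :
    P1Feas Ki lam c X := by
  refine ⟨hX.1, hX.2.1, fun i k hk => ?_⟩
  have h := Finset.sum_eq_zero_iff.mp h0 i (mem_univ i)
  have h2 := Finset.sum_eq_zero_iff.mp h k hk
  have h3 := hX.2.2 i k hk
  omega

lemma total_nload (Ki : U → Finset K) (X : U → M → K → ℕ) :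
    ∑ j : M, nload Ki X j = ∑ i, ∑ k ∈ Ki i, ∑ j : M, X i j k := by
  unfold nload
  rw [Finset.sum_comm]
  exact Finset.sum_congr rfl (fun i _ => Finset.sum_comm)

lemma complete (Ki : U → Finset K) (lam : ℝ) (hlam : 0 < lam) (c : M → ℝ)
    (F : (U → M → K → ℕ) → ℝ)
    (himp : ∀ (X : U → M → K → ℕ), IsAssign X →
      ∀ i₀ j₀ k₀, k₀ ∈ Ki i₀ → X i₀ j₀ k₀ = 0 →
        F (fun i j k => if i = i₀ ∧ j = j₀ ∧ k = k₀ then 1 else X i j k) > F X)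
    (X0 : U → M → K → ℕ) (hX0 : P1Feas Ki lam c X0) :
    ∀ n (X : U → M → K → ℕ), P2Feas Ki lam c X → defic Ki X ≤ n →
      ∃ X', P1Feas Ki lam c X' ∧ F X ≤ F X' := by
  intro n
  induction n with
  | zero =>
    intro X hX hd
    exact ⟨X, defic_zero_P1 Ki lam c X hX (Nat.le_zero.mp hd), le_refl _⟩
  | succ n ih =>
    intro X hX hd
    by_cases h0 : defic Ki X = 0
    · exact ⟨X, defic_zero_P1 Ki lam c X hX h0, le_refl _⟩
    -- find an unassigned request (i₀, k₀)
    obtain ⟨i₀, -, hi₀⟩ := Finset.exists_ne_zero_of_sum_ne_zero h0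
    obtain ⟨k₀, hk₀, hik⟩ := Finset.exists_ne_zero_of_sum_ne_zero hi₀
    have hs0 : ∑ j : M, X i₀ j k₀ = 0 := by omega
    have hzero : ∀ j, X i₀ j k₀ = 0 := fun j =>
      Finset.sum_eq_zero_iff.mp hs0 j (mem_univ j)
    -- find a server with slack, by comparing with X0
    have hlt : ∑ j : M, nload Ki X j < ∑ j : M, nload Ki X0 j := by
      rw [total_nload, total_nload]
      refine Finset.sum_lt_sum (fun i _ => ?_) ⟨i₀, mem_univ i₀, ?_⟩
      · refine Finset.sum_le_sum (fun k hk => ?_)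
        rw [hX0.2.2 i k hk]
        exact hX.2.2 i k hk
      · refine Finset.sum_lt_sum (fun k hk => ?_) ⟨k₀, hk₀, ?_⟩
        · rw [hX0.2.2 i₀ k hk]; exact hX.2.2 i₀ k hk
        · rw [hX0.2.2 i₀ k₀ hk₀, hs0]; omega
    have hj₀ : ∃ j₀, nload Ki X j₀ < nload Ki X0 j₀ := by
      by_contra hc
      push_neg at hc
      exact absurd (Finset.sum_le_sum (fun j (_ : j ∈ univ) => hc j)) (not_le.mpr hlt)
    obtain ⟨j₀, hj₀⟩ := hj₀
    set X' : U → M → K → ℕ :=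
      fun i j k => if i = i₀ ∧ j = j₀ ∧ k = k₀ then 1 else X i j k with hX'def
    have hXsplit : ∀ i j k,
        X' i j k = X i j k + (if i = i₀ ∧ j = j₀ ∧ k = k₀ then 1 else 0) := by
      intro i j k
      by_cases h : i = i₀ ∧ j = j₀ ∧ k = k₀
      · obtain ⟨hi, hj, hk⟩ := h
        simp [hX'def, hi, hj, hk, hzero j₀]
      · simp [hX'def, h]
    have hite1 : ∀ j, (∑ i, ∑ k ∈ Ki i, if i = i₀ ∧ j = j₀ ∧ k = k₀ then (1:ℕ) else 0)
        = if j = j₀ then 1 else 0 := by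
      intro j
      by_cases hj : j = j₀
      · rw [if_pos hj]
        calc ∑ i, ∑ k ∈ Ki i, (if i = i₀ ∧ j = j₀ ∧ k = k₀ then (1:ℕ) else 0)
            = ∑ i, ∑ k ∈ Ki i, (if i = i₀ ∧ k = k₀ then (1:ℕ) else 0) := by
              refine Finset.sum_congr rfl fun i _ => Finset.sum_congr rfl fun k _ => ?_
              simp [hj]
          _ = ∑ i, (if i = i₀ then (1:ℕ) else 0) := by
              refine Finset.sum_congr rfl fun i _ => ?_
              by_cases hi : i = i₀
              · simp [hi, Finset.sum_ite_eq', hk₀]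
              · simp [hi]
          _ = 1 := by simp
      · rw [if_neg hj]
        refine Finset.sum_eq_zero fun i _ => Finset.sum_eq_zero fun k _ => ?_
        rw [if_neg]; rintro ⟨-, h2, -⟩; exact hj h2
    have hite2 : ∀ i k, (∑ j : M, if i = i₀ ∧ j = j₀ ∧ k = k₀ then (1:ℕ) else 0)
        = if i = i₀ ∧ k = k₀ then 1 else 0 := by
      intro i k
      by_cases h : i = i₀ ∧ k = k₀
      · rw [if_pos h]
        calc (∑ j : M, if i = i₀ ∧ j = j₀ ∧ k = k₀ then (1:ℕ) else 0)
            = ∑ j : M, (if j = j₀ then (1:ℕ) else 0) := by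
              refine Finset.sum_congr rfl fun j _ => ?_
              simp [h.1, h.2]
          _ = 1 := by simp
      · rw [if_neg h]
        refine Finset.sum_eq_zero fun j _ => ?_
        rw [if_neg]; rintro ⟨h1, -, h3⟩; exact h ⟨h1, h3⟩
    have hnload : ∀ j, nload Ki X' j = nload Ki X j + if j = j₀ then 1 else 0 := by
      intro j
      unfold nload
      simp only [hXsplit, Finset.sum_add_distrib]
      rw [hite1 j]
    have hsum2 : ∀ i k, ∑ j : M, X' i j k
        = (∑ j : M, X i j k) + if i = i₀ ∧ k = k₀ then 1 else 0 := by
      intro i k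
      simp only [hXsplit, Finset.sum_add_distrib]
      rw [hite2 i k]
    have hX'assign : IsAssign X' := by
      intro i j k
      rw [hX'def]
      by_cases h : i = i₀ ∧ j = j₀ ∧ k = k₀ <;> simp [h]
      exact hX.1 i j k
    have hX'P2 : P2Feas Ki lam c X' := by
      refine ⟨hX'assign, fun j => ?_, fun i k hk => ?_⟩
      · rw [load_eq_nload, hnload j]
        by_cases hj : j = j₀
        · subst hj
          rw [if_pos rfl]
          have h1 : lam * ((nload Ki X j : ℝ) + 1) ≤ lam * (nload Ki X0 j : ℝ) := by
            apply mul_le_mul_of_nonneg_left _ hlam.le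
            have : (nload Ki X j : ℝ) + 1 ≤ (nload Ki X0 j : ℝ) := by
              exact_mod_cast hj₀
            linarith
          calc lam * ((nload Ki X j + 1 : ℕ) : ℝ)
              = lam * ((nload Ki X j : ℝ) + 1) := by push_cast; ring
            _ ≤ lam * (nload Ki X0 j : ℝ) := h1
            _ = load Ki lam X0 j := (load_eq_nload _ _ _ _).symm
            _ ≤ c j := hX0.2.1 j
        · simp only [if_neg hj, Nat.add_zero]
          rw [← load_eq_nload]
          exact hX.2.1 j
      · rw [hsum2 i k]
        by_cases h : i = i₀ ∧ k = k₀
        · rw [if_pos h, h.1, h.2, hs0]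
        · rw [if_neg h, Nat.add_zero]
          exact hX.2.2 i k hk
    have hdef' : defic Ki X' < defic Ki X := by
      unfold defic
      refine Finset.sum_lt_sum (fun i _ => ?_) ⟨i₀, mem_univ i₀, ?_⟩
      · refine Finset.sum_le_sum (fun k hk => ?_)
        rw [hsum2 i k]
        omega
      · refine Finset.sum_lt_sum (fun k hk => ?_) ⟨k₀, hk₀, ?_⟩
        · rw [hsum2 i₀ k]; omega
        · rw [hsum2 i₀ k₀, if_pos ⟨rfl, rfl⟩, hs0]
          omega
    have hF : F X < F X' := himp X hX.1 i₀ j₀ k₀ hk₀ (hzero j₀)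
    obtain ⟨X'', hX''⟩ := ih X' hX'P2 (by omega)
    exact ⟨X'', hX''.1, le_trans hF.le hX''.2⟩

end Aux

/-- under the strict-improvement hypothesis, if P1 is feasible then
the optimal value of P2 equals the optimal value of P1. -/
theorem P2_value_eq_P1_value
    {U M K : Type*} [Fintype U] [Fintype M] [Fintype K]
    [DecidableEq U] [DecidableEq M] [DecidableEq K]
    (Ki : U → Finset K) (lam : ℝ) (hlam : 0 < lam) (c : M → ℝ)
    (F : (U → M → K → ℕ) → ℝ)
    (himp : ∀ (X : U → M → K → ℕ), IsAssign X →
      ∀ i₀ j₀ k₀, k₀ ∈ Ki i₀ → X i₀ j₀ k₀ = 0 →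
        F (fun i j k => if i = i₀ ∧ j = j₀ ∧ k = k₀ then 1 else X i j k) > F X)
    (hfeas : ∃ X, P1Feas Ki lam c X) :
    sSup {y : ℝ | ∃ X, P2Feas Ki lam c X ∧ F X = y} =
      sSup {y : ℝ | ∃ X, P1Feas Ki lam c X ∧ F X = y} := by
  obtain ⟨X0, hX0⟩ := hfeas
  set S2 := {y : ℝ | ∃ X, P2Feas Ki lam c X ∧ F X = y} with hS2
  set S1 := {y : ℝ | ∃ X, P1Feas Ki lam c X ∧ F X = y} with hS1
  -- the set of assignments is finite
  have hAfin : (Set.range fun f : U → M → K → Fin 2 =>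
      (fun i j k => (f i j k : ℕ) : U → M → K → ℕ)).Finite := Set.finite_range _
  have hassign_fin : {X : U → M → K → ℕ | IsAssign X}.Finite := by
    refine hAfin.subset ?_
    intro X hX
    refine ⟨fun i j k => ⟨X i j k, by have := hX i j k; omega⟩, ?_⟩
    funext i j k; rfl
  have hS2fin : S2.Finite := by
    refine (hassign_fin.image F).subset ?_
    rintro y ⟨X, hX, rfl⟩
    exact ⟨X, hX.1, rfl⟩
  have hS1fin : S1.Finite := by
    refine (hassign_fin.image F).subset ?_
    rintro y ⟨X, hX, rfl⟩
    exact ⟨X, hX.1, rfl⟩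
  have hP1toP2 : ∀ X, P1Feas Ki lam c X → P2Feas Ki lam c X := by
    rintro X ⟨h1, h2, h3⟩
    exact ⟨h1, h2, fun i k hk => (h3 i k hk).le⟩
  have hS1ne : S1.Nonempty := ⟨F X0, X0, hX0, rfl⟩
  have hS2ne : S2.Nonempty := ⟨F X0, X0, hP1toP2 X0 hX0, rfl⟩
  apply le_antisymm
  · apply csSup_le hS2ne
    rintro y ⟨X, hX, rfl⟩
    obtain ⟨X', hX', hFX⟩ := complete Ki lam hlam c F himp X0 hX0
      (defic Ki X) X hX le_rfl
    exact le_trans hFX (le_csSup hS1fin.bddAbove ⟨X', hX', rfl⟩)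
  · exact csSup_le_csSup hS2fin.bddAbove hS1ne
      (fun y ⟨X, hX, hy⟩ => ⟨X, hP1toP2 X hX, hy⟩)
end
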